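/- Fix an integer N ≥ 3 and set θ_i = 2πi/N for i = 0, …, N−1. Let P = {i : cos θ_i > 0}, S_c = ∑_{i ∈ P} cos²θ_i, and S_s = ∑_{i=1}^{N−1} sin²θ_i. Suppose V₀ > 0, V_i = 0 for i ≠ 0, and 0 < δ < min(1/S_c, 1/S_s). Let r̄ be the stationary bump solution with m̄ = V₀/(1 − δ S_c), r̄_0 = δ m̄ + V₀, r̄_j = δ m̄ cos θ_j for j ∈ P \ {0}, and r̄_j = 0 for j ∉ P. Then r̄ is locally asymptotically stable: there exists an open neighborhood U of r̄ in ℝ^N such that every differentiable solution r : [0, ∞) → ℝ^N of the N-dimensional ring system with r(0) ∈ U satisfies r(t) → r̄ as t → ∞. -/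

import Mathlib

open Real Filter

lemma ring_sum_exp_zero (N : ℕ) (hN : 3 ≤ N) :
    ∑ i ∈ Finset.range N, Complex.exp (4 * π * Complex.I * i / N) = 0 := by
  have hN0 : (N : ℂ) ≠ 0 := Nat.cast_ne_zero.2 (by omega)
  set z : ℂ := Complex.exp (4 * π * Complex.I / N) with hzdef
  have hpow : ∀ i : ℕ, Complex.exp (4 * π * Complex.I * i / N) = z ^ i := by
    intro i
    rw [hzdef, ← Complex.exp_nat_mul]
    ring_nf
  have hzN : z ^ N = 1 := by
    rw [hzdef, ← Complex.exp_nat_mul]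
    have h1 : (N : ℂ) * (4 * π * Complex.I / N) = ((2 : ℕ) : ℂ) * (2 * π * Complex.I) := by
      field_simp; ring
    rw [h1, Complex.exp_nat_mul_two_pi_mul_I]
  have hz1 : z ≠ 1 := by
    rw [hzdef, Ne, Complex.exp_eq_one_iff]
    rintro ⟨n, hn⟩
    have h2πI : (2 * (π : ℂ) * Complex.I) ≠ 0 := by
      simp [Real.pi_ne_zero, Complex.I_ne_zero, Complex.ofReal_ne_zero]
    have h2 : (2 : ℂ) = (n : ℂ) * N := by
      apply mul_left_cancel₀ h2πI
      field_simp at hn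
      linear_combination (π * Complex.I) * hn
    have h2' : (2 : ℤ) = n * N := by exact_mod_cast h2
    have hN3 : (3 : ℤ) ≤ (N : ℤ) := by exact_mod_cast hN
    rcases lt_trichotomy n 0 with h | h | h
    · nlinarith
    · simp [h] at h2'
    · nlinarith
  calc ∑ i ∈ Finset.range N, Complex.exp (4 * π * Complex.I * i / N)
      = ∑ i ∈ Finset.range N, z ^ i := Finset.sum_congr rfl fun i _ => hpow i
    _ = (z ^ N - 1) / (z - 1) := geom_sum_eq hz1 N
    _ = 0 := by rw [hzN]; simp

lemma ring_bessel {N : ℕ} (hN0 : 0 < N) (c s e : Fin N → ℝ)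
    (hcc : ∑ i, c i ^ 2 = N / 2) (hss : ∑ i, s i ^ 2 = N / 2)
    (hcs : ∑ i, c i * s i = 0) :
    ∑ i, (∑ j, (c i * c j + s i * s j) * e j) ^ 2
      ≤ ((N : ℝ) / 2) ^ 2 * ∑ j, e j ^ 2 := by
  have hNR : (0 : ℝ) < N := by exact_mod_cast hN0
  have hNne : (N : ℝ) ≠ 0 := ne_of_gt hNR
  set a := ∑ j, c j * e j with ha
  set b := ∑ j, s j * e j with hb
  have hinner : ∀ i, ∑ j, (c i * c j + s i * s j) * e j = c i * a + s i * b := by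
    intro i
    rw [ha, hb, Finset.mul_sum, Finset.mul_sum, ← Finset.sum_add_distrib]
    exact Finset.sum_congr rfl fun j _ => by ring
  have expand : ∀ x y : ℝ, ∑ i, (c i * x + s i * y) ^ 2 = ((N : ℝ) / 2) * (x ^ 2 + y ^ 2) := by
    intro x y
    have hpt : ∀ i : Fin N, (c i * x + s i * y) ^ 2
        = x ^ 2 * c i ^ 2 + (2 * x * y) * (c i * s i) + y ^ 2 * s i ^ 2 := fun i => by ring
    rw [Finset.sum_congr rfl fun i _ => hpt i, Finset.sum_add_distrib, Finset.sum_add_distrib,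
      ← Finset.mul_sum, ← Finset.mul_sum, ← Finset.mul_sum, hcc, hss, hcs]
    ring
  have hq : (0 : ℝ) ≤ ∑ j, e j ^ 2 := Finset.sum_nonneg fun j _ => sq_nonneg _
  have h0 : (0 : ℝ) ≤ ∑ i, (e i - (2 / N) * (c i * a + s i * b)) ^ 2 :=
    Finset.sum_nonneg fun i _ => sq_nonneg _
  have s1 : ∑ i, (a * (c i * e i) + b * (s i * e i))
      = a * a + b * b := by
    rw [Finset.sum_add_distrib, ← Finset.mul_sum, ← Finset.mul_sum, ← ha, ← hb]
  have hexp : ∑ i, (e i - (2 / N) * (c i * a + s i * b)) ^ 2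
      = (∑ i, e i ^ 2) - (4 / N) * (∑ i, (a * (c i * e i) + b * (s i * e i)))
        + (2 / N) ^ 2 * ∑ i, (c i * a + s i * b) ^ 2 := by
    have hpt : ∀ i : Fin N, (e i - (2 / N) * (c i * a + s i * b)) ^ 2
        = e i ^ 2 - (4 / N) * (a * (c i * e i) + b * (s i * e i))
          + (2 / N) ^ 2 * (c i * a + s i * b) ^ 2 := fun i => by ring
    rw [Finset.sum_congr rfl fun i _ => hpt i, Finset.sum_add_distrib, Finset.sum_sub_distrib,
      ← Finset.mul_sum, ← Finset.mul_sum]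
  have h0' : (2 / (N : ℝ)) * (a ^ 2 + b ^ 2) ≤ ∑ j, e j ^ 2 := by
    have heq : ∑ i, (e i - (2 / N) * (c i * a + s i * b)) ^ 2
        = (∑ j, e j ^ 2) - (2 / N) * (a ^ 2 + b ^ 2) := by
      rw [hexp, s1, expand a b]
      field_simp
      ring
    linarith [heq ▸ h0]
  have hfin : ((N : ℝ) / 2) ^ 2 * ((2 / N) * (a ^ 2 + b ^ 2))
      = ((N : ℝ) / 2) * (a ^ 2 + b ^ 2) := by
    field_simp
  calc ∑ i, (∑ j, (c i * c j + s i * s j) * e j) ^ 2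
      = ∑ i, (c i * a + s i * b) ^ 2 := Finset.sum_congr rfl fun i _ => by rw [hinner i]
    _ = ((N : ℝ) / 2) * (a ^ 2 + b ^ 2) := expand a b
    _ ≤ ((N : ℝ) / 2) ^ 2 * ∑ j, e j ^ 2 := by
        have := mul_le_mul_of_nonneg_left h0' (by positivity : (0 : ℝ) ≤ ((N : ℝ) / 2) ^ 2)
        rw [hfin] at this
        linarith

lemma ring_trig_sums (N : ℕ) (hN : 3 ≤ N) (θ : Fin N → ℝ)
    (hθ : ∀ i : Fin N, θ i = 2 * π * i / N) :
    (∑ i : Fin N, Real.cos (θ i) ^ 2 = N / 2) ∧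
    (∑ i : Fin N, Real.sin (θ i) ^ 2 = N / 2) ∧
    (∑ i : Fin N, Real.cos (θ i) * Real.sin (θ i) = 0) := by
  have hsum := ring_sum_exp_zero N hN
  have hre1 : ∀ k : ℕ, Real.cos (4 * π * k / N) = (Complex.exp (4 * π * Complex.I * k / N)).re := by
    intro k
    rw [show (4 * (π : ℂ) * Complex.I * k / N) = ((4 * π * k / N : ℝ) : ℂ) * Complex.I by
      push_cast; ring, Complex.exp_ofReal_mul_I_re]
  have him1 : ∀ k : ℕ, Real.sin (4 * π * k / N) = (Complex.exp (4 * π * Complex.I * k / N)).im := by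
    intro k
    rw [show (4 * (π : ℂ) * Complex.I * k / N) = ((4 * π * k / N : ℝ) : ℂ) * Complex.I by
      push_cast; ring, Complex.exp_ofReal_mul_I_im]
  have hre : ∑ i : Fin N, Real.cos (2 * θ i) = 0 := by
    calc ∑ i : Fin N, Real.cos (2 * θ i)
        = ∑ i : Fin N, (Complex.exp (4 * π * Complex.I * (i : ℕ) / N)).re := by
          refine Finset.sum_congr rfl fun i _ => ?_
          rw [hθ i, ← hre1 (i : ℕ)]
          congr 1; ring
      _ = (∑ i : Fin N, Complex.exp (4 * π * Complex.I * (i : ℕ) / N)).re :=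
          (Complex.re_sum _ _).symm
      _ = (∑ i ∈ Finset.range N, Complex.exp (4 * π * Complex.I * i / N)).re := by
          rw [Fin.sum_univ_eq_sum_range (fun k : ℕ => Complex.exp (4 * π * Complex.I * k / N)) N]
      _ = 0 := by rw [hsum]; rfl
  have him : ∑ i : Fin N, Real.sin (2 * θ i) = 0 := by
    calc ∑ i : Fin N, Real.sin (2 * θ i)
        = ∑ i : Fin N, (Complex.exp (4 * π * Complex.I * (i : ℕ) / N)).im := by
          refine Finset.sum_congr rfl fun i _ => ?_
          rw [hθ i, ← him1 (i : ℕ)]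
          congr 1; ring
      _ = (∑ i : Fin N, Complex.exp (4 * π * Complex.I * (i : ℕ) / N)).im :=
          (Complex.im_sum _ _).symm
      _ = (∑ i ∈ Finset.range N, Complex.exp (4 * π * Complex.I * i / N)).im := by
          rw [Fin.sum_univ_eq_sum_range (fun k : ℕ => Complex.exp (4 * π * Complex.I * k / N)) N]
      _ = 0 := by rw [hsum]; rfl
  have hcard : ∑ _i : Fin N, (1 : ℝ) = N := by
    rw [Finset.sum_const, Finset.card_univ, Fintype.card_fin, nsmul_eq_mul, mul_one]
  have hcc : ∑ i : Fin N, Real.cos (θ i) ^ 2 = N / 2 := by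
    have hpt : ∀ i : Fin N, Real.cos (θ i) ^ 2 = 1 / 2 + Real.cos (2 * θ i) / 2 := fun i =>
      Real.cos_sq _
    rw [Finset.sum_congr rfl fun i _ => hpt i, Finset.sum_add_distrib, ← Finset.sum_div,
      ← Finset.sum_div, hre, hcard]
    ring
  refine ⟨hcc, ?_, ?_⟩
  · have hpt : ∀ i : Fin N, Real.sin (θ i) ^ 2 = 1 - Real.cos (θ i) ^ 2 := fun i =>
      Real.sin_sq _
    rw [Finset.sum_congr rfl fun i _ => hpt i, Finset.sum_sub_distrib, hcc, hcard]
    ring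
  · have hpt : ∀ i : Fin N, Real.cos (θ i) * Real.sin (θ i) = Real.sin (2 * θ i) / 2 := by
      intro i
      rw [Real.sin_two_mul]; ring
    rw [Finset.sum_congr rfl fun i _ => hpt i, ← Finset.sum_div, him]
    norm_num

set_option maxHeartbeats 1000000 in
open Classical in
/-- Local asymptotic stability of the bump stationary solution of the
`N`-dimensional ring system: with `P = {i : cos θ_i > 0}`,
`S_c = ∑_{i∈P} cos²θ_i`, `S_s = ∑_{i=1}^{N-1} sin²θ_i`, inputs `V₀ > 0` at
index `0` and `0` elsewhere, and `0 < δ < min (1/S_c) (1/S_s)`, the bump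
`r̄` admits an open neighborhood `U` such that every solution starting in
`U` converges to `r̄`. -/
theorem stmt14 (N : ℕ) (hN : 3 ≤ N) (δ V₀ : ℝ) (hV₀ : 0 < V₀)
    (θ : Fin N → ℝ) (hθ : ∀ i : Fin N, θ i = 2 * π * i / N)
    (V : Fin N → ℝ) (hV0 : V ⟨0, by omega⟩ = V₀)
    (hVi : ∀ i : Fin N, i ≠ ⟨0, by omega⟩ → V i = 0)
    (P : Finset (Fin N))
    (hP : P = Finset.univ.filter fun i => 0 < Real.cos (θ i))
    (Sc Ss : ℝ) (hSc : Sc = ∑ i ∈ P, Real.cos (θ i) ^ 2)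
    (hSs : Ss = ∑ i ∈ Finset.univ.erase (⟨0, by omega⟩ : Fin N),
      Real.sin (θ i) ^ 2)
    (hδ0 : 0 < δ) (hδ : δ < min (1 / Sc) (1 / Ss))
    (m : ℝ) (hm : m = V₀ / (1 - δ * Sc))
    (rb : Fin N → ℝ)
    (hrb0 : rb ⟨0, by omega⟩ = δ * m + V₀)
    (hrbP : ∀ j ∈ P, j ≠ (⟨0, by omega⟩ : Fin N) → rb j = δ * m * Real.cos (θ j))
    (hrbN : ∀ j : Fin N, j ∉ P → rb j = 0) :
    ∃ U : Set (Fin N → ℝ), IsOpen U ∧ rb ∈ U ∧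
      ∀ r : Fin N → ℝ → ℝ,
        (∀ i : Fin N, ∀ t ≥ (0 : ℝ), HasDerivAt (r i)
          (-r i t + max (δ * ∑ j, Real.cos (θ i - θ j) * r j t + V i) 0) t) →
        (fun i => r i 0) ∈ U →
        Tendsto (fun t => fun i => r i t) atTop (nhds rb) := by
  have hNR : (0 : ℝ) < N := by positivity
  have hNne : (N : ℝ) ≠ 0 := ne_of_gt hNR
  -- basic facts about index 0
  set i0 : Fin N := ⟨0, by omega⟩ with hi0def
  have hθ0 : θ i0 = 0 := by
    rw [hθ i0]
    norm_num [hi0def]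
  have hcos0 : Real.cos (θ i0) = 1 := by rw [hθ0, Real.cos_zero]
  have hPmem : ∀ j : Fin N, j ∈ P ↔ 0 < Real.cos (θ j) := by
    intro j; rw [hP]; simp
  have hi0P : i0 ∈ P := by rw [hPmem, hcos0]; norm_num
  -- trig sums
  obtain ⟨hcc, hss2, hcs⟩ := ring_trig_sums N hN θ hθ
  -- Ss value and contraction constant
  have hSsval : Ss = N / 2 := by
    rw [hSs, Finset.sum_erase_eq_sub (Finset.mem_univ i0), hss2, hθ0]
    simp
  set K : ℝ := δ * ((N : ℝ) / 2) with hKdef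
  have hK0 : 0 ≤ K := by positivity
  have hK1 : K < 1 := by
    have hδSs : δ < 1 / Ss := lt_of_lt_of_le hδ (min_le_right _ _)
    rw [hSsval] at hδSs
    have h1 : (1 : ℝ) / ((N : ℝ) / 2) = 2 / N := by field_simp
    rw [h1] at hδSs
    calc K < (2 / N) * ((N : ℝ) / 2) := by
          apply mul_lt_mul_of_pos_right hδSs (by positivity)
      _ = 1 := by field_simp
  -- Sc facts
  have hSc1 : (1 : ℝ) ≤ Sc := by
    rw [hSc]
    calc (1 : ℝ) = Real.cos (θ i0) ^ 2 := by rw [hcos0]; norm_num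
      _ ≤ ∑ i ∈ P, Real.cos (θ i) ^ 2 :=
          Finset.single_le_sum (f := fun i => Real.cos (θ i) ^ 2) (fun j _ => sq_nonneg _) hi0P
  have hδSc : δ * Sc < 1 := by
    have h1Sc : δ < 1 / Sc := lt_of_lt_of_le hδ (min_le_left _ _)
    have hScpos : (0 : ℝ) < Sc := by linarith
    calc δ * Sc < (1 / Sc) * Sc := mul_lt_mul_of_pos_right h1Sc hScpos
      _ = 1 := by field_simp
  have hmpos : 0 < m := by
    rw [hm]; exact div_pos hV₀ (by linarith)
  have hmV : m * (1 - δ * Sc) = V₀ := by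
    rw [hm, div_mul_cancel₀ _ (ne_of_gt (by linarith : (0:ℝ) < 1 - δ * Sc))]
  -- uniform description of rb on P
  have hrbP' : ∀ j ∈ P, rb j = δ * m * Real.cos (θ j) + (if j = i0 then V₀ else 0) := by
    intro j hj
    by_cases h : j = i0
    · rw [h, if_pos rfl, hcos0, hrb0]; ring
    · rw [hrbP j hj h, if_neg h, add_zero]
  -- splitting sums over P
  have hsplit : ∀ g : Fin N → ℝ, (∀ j, j ∉ P → g j = 0) →
      ∑ j : Fin N, g j = ∑ j ∈ P, g j := by
    intro g hg
    exact (Finset.sum_subset (Finset.subset_univ P) (fun x _ hx => hg x hx)).symm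
  -- first moment
  have ha : ∑ j : Fin N, Real.cos (θ j) * rb j = m := by
    rw [hsplit _ (fun j hj => by rw [hrbN j hj, mul_zero])]
    have h1 : ∑ j ∈ P, Real.cos (θ j) * rb j
        = ∑ j ∈ P, (δ * m * Real.cos (θ j) ^ 2 + (if j = i0 then Real.cos (θ j) * V₀ else 0)) := by
      refine Finset.sum_congr rfl fun j hj => ?_
      rw [hrbP' j hj]
      by_cases h : j = i0 <;> simp [h] <;> ring
    rw [h1, Finset.sum_add_distrib, Finset.sum_ite_eq' P i0 (fun j => Real.cos (θ j) * V₀),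
      if_pos hi0P, hcos0, ← Finset.mul_sum, ← hSc]
    linear_combination -hmV
  -- second moment vanishes (symmetry)
  have hb : ∑ j : Fin N, Real.sin (θ j) * rb j = 0 := by
    rw [hsplit _ (fun j hj => by rw [hrbN j hj, mul_zero])]
    set neg : Fin N → Fin N := fun j => ⟨(N - j.val) % N, Nat.mod_lt _ (by omega)⟩ with hnegdef
    have hnegval : ∀ j : Fin N, (neg j).val = (N - j.val) % N := fun j => rfl
    have hnegtrig : ∀ j : Fin N, Real.cos (θ (neg j)) = Real.cos (θ j) ∧
        Real.sin (θ (neg j)) = -Real.sin (θ j) := by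
      intro j
      by_cases h : j.val = 0
      · have hj : neg j = j := by
          apply Fin.ext; rw [hnegval, h, Nat.sub_zero, Nat.mod_self]
        have hθj : θ j = 0 := by
          rw [hθ j]
          have : ((j : ℕ) : ℝ) = 0 := by rw [h]; norm_num
          rw [this]; ring
        rw [hj, hθj]; simp
      · have hlt : N - j.val < N := by omega
        have hval : (neg j).val = N - j.val := by rw [hnegval, Nat.mod_eq_of_lt hlt]
        have hθn : θ (neg j) = 2 * π - θ j := by
          rw [hθ (neg j), hθ j]
          have hc : (((neg j : Fin N) : ℕ) : ℝ) = (N : ℝ) - (j : ℕ) := by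
            rw [hval, Nat.cast_sub (le_of_lt j.isLt)]
          rw [hc]
          field_simp
        rw [hθn, Real.cos_two_pi_sub, Real.sin_two_pi_sub]
        exact ⟨rfl, rfl⟩
    have hnegneg : ∀ j : Fin N, neg (neg j) = j := by
      intro j
      apply Fin.ext
      rw [hnegval, hnegval]
      rcases Nat.eq_zero_or_pos j.val with h | h
      · rw [h, Nat.sub_zero, Nat.mod_self, Nat.sub_zero, Nat.mod_self]
      · rw [Nat.mod_eq_of_lt (by omega : N - j.val < N),
          show N - (N - j.val) = j.val by omega, Nat.mod_eq_of_lt j.isLt]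
    have hnegP : ∀ j ∈ P, neg j ∈ P := by
      intro j hj
      rw [hPmem] at hj ⊢
      rw [(hnegtrig j).1]; exact hj
    have hnegi0 : ∀ j : Fin N, neg j = i0 ↔ j = i0 := by
      have hni0 : neg i0 = i0 := by
        apply Fin.ext; rw [hnegval]
        simp [hi0def, Nat.mod_self]
      intro j
      constructor
      · intro hc
        have := congrArg neg hc
        rw [hnegneg, hni0] at this
        exact this
      · intro hc; rw [hc, hni0]
    have hrbneg : ∀ j ∈ P, rb (neg j) = rb j := by
      intro j hj
      rw [hrbP' _ (hnegP j hj), hrbP' j hj, (hnegtrig j).1]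
      congr 1
      by_cases h : j = i0
      · rw [if_pos ((hnegi0 j).2 h), if_pos h]
      · rw [if_neg (fun hc => h ((hnegi0 j).1 hc)), if_neg h]
    refine Finset.sum_involution (fun j _ => neg j) ?_ ?_ ?_ ?_
    · intro j hj
      rw [(hnegtrig j).2, hrbneg j hj]; ring
    · intro j hj hne hc
      apply hne
      have h1 := (hnegtrig j).2
      have hc' : neg j = j := hc
      rw [hc'] at h1
      have h2 : Real.sin (θ j) = 0 := by linarith
      rw [h2, zero_mul]
    · intro j hj; exact hnegP j hj
    · intro j hj; exact hnegneg j
  -- fixed point property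
  have hWrb : ∀ i : Fin N, ∑ j, Real.cos (θ i - θ j) * rb j = m * Real.cos (θ i) := by
    intro i
    have hpt : ∀ j : Fin N, Real.cos (θ i - θ j) * rb j
        = Real.cos (θ i) * (Real.cos (θ j) * rb j) + Real.sin (θ i) * (Real.sin (θ j) * rb j) := by
      intro j; rw [Real.cos_sub]; ring
    rw [Finset.sum_congr rfl fun j _ => hpt j, Finset.sum_add_distrib, ← Finset.mul_sum,
      ← Finset.mul_sum, ha, hb]
    ring
  have hfix : ∀ i : Fin N, max (δ * ∑ j, Real.cos (θ i - θ j) * rb j + V i) 0 = rb i := by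
    intro i
    rw [hWrb i]
    by_cases hi : i ∈ P
    · by_cases h0 : i = i0
      · rw [h0, hV0, hcos0, hrb0,
          max_eq_left (by nlinarith [mul_pos hδ0 hmpos] : (0:ℝ) ≤ δ * (m * 1) + V₀)]
        ring
      · have hVi' : V i = 0 := hVi i h0
        have hcosP : 0 < Real.cos (θ i) := (hPmem i).1 hi
        rw [hVi', hrbP i hi h0,
          max_eq_left (by nlinarith [mul_pos hδ0 (mul_pos hmpos hcosP)] :
            (0:ℝ) ≤ δ * (m * Real.cos (θ i)) + 0)]
        ring
    · have hi0ne : i ≠ i0 := fun hc => hi (hc ▸ hi0P)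
      have hVi' : V i = 0 := hVi i hi0ne
      have hcosN : Real.cos (θ i) ≤ 0 := le_of_not_gt fun hc => hi ((hPmem i).2 hc)
      rw [hVi', hrbN i hi, max_eq_right (by
        nlinarith [mul_nonpos_of_nonneg_of_nonpos (mul_nonneg hδ0.le hmpos.le) hcosN] :
          δ * (m * Real.cos (θ i)) + 0 ≤ 0)]
  -- the dynamics: global contraction
  refine ⟨Set.univ, isOpen_univ, Set.mem_univ _, ?_⟩
  intro r hode _
  set φ : (Fin N → ℝ) ≃L[ℝ] EuclideanSpace ℝ (Fin N) := (EuclideanSpace.equiv (Fin N) ℝ).symm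
    with hφdef
  set u : ℝ → EuclideanSpace ℝ (Fin N) :=
    fun t => φ (fun i => Real.exp t * (r i t - rb i)) with hudef
  set u' : ℝ → EuclideanSpace ℝ (Fin N) :=
    fun t => φ (fun i => Real.exp t *
      (max (δ * ∑ j, Real.cos (θ i - θ j) * r j t + V i) 0 - rb i)) with hu'def
  have huapp : ∀ (t : ℝ) (i : Fin N), u t i = Real.exp t * (r i t - rb i) := fun _ _ => rfl
  have hu'app : ∀ (t : ℝ) (i : Fin N), u' t i = Real.exp t *
      (max (δ * ∑ j, Real.cos (θ i - θ j) * r j t + V i) 0 - rb i) := fun _ _ => rfl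
  have hderiv : ∀ t ≥ (0 : ℝ), HasDerivAt u (u' t) t := by
    intro t ht
    have hw : HasDerivAt (fun s => (fun i => Real.exp s * (r i s - rb i) : Fin N → ℝ))
        (fun i => Real.exp t *
          (max (δ * ∑ j, Real.cos (θ i - θ j) * r j t + V i) 0 - rb i)) t := by
      rw [hasDerivAt_pi]
      intro i
      have h1 : HasDerivAt (fun x => Real.exp x * (r i x - rb i)) _ t :=
        (Real.hasDerivAt_exp t).mul ((hode i t ht).sub_const (rb i))
      exact h1.congr_deriv (by ring)
    exact (φ.toContinuousLinearMap.hasFDerivAt).comp_hasDerivAt t hw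
  have hnorm_sq : ∀ x : EuclideanSpace ℝ (Fin N), ‖x‖ ^ 2 = ∑ i, (x i) ^ 2 := by
    intro x
    rw [EuclideanSpace.norm_eq, Real.sq_sqrt (Finset.sum_nonneg fun i _ => sq_nonneg _)]
    exact Finset.sum_congr rfl fun i _ => by rw [Real.norm_eq_abs, sq_abs]
  have hbound : ∀ t ≥ (0 : ℝ), ‖u' t‖ ≤ K * ‖u t‖ := by
    intro t ht
    have h2 : ‖u' t‖ ^ 2 ≤ (K * ‖u t‖) ^ 2 := by
      rw [hnorm_sq, mul_pow, hnorm_sq]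
      have hptwise : ∀ i : Fin N, (u' t i) ^ 2
          ≤ (Real.exp t) ^ 2 * (δ ^ 2 * (∑ j, Real.cos (θ i - θ j) * (r j t - rb j)) ^ 2) := by
        intro i
        have hAB : (δ * ∑ j, Real.cos (θ i - θ j) * r j t + V i)
            - (δ * ∑ j, Real.cos (θ i - θ j) * rb j + V i)
            = δ * ∑ j, Real.cos (θ i - θ j) * (r j t - rb j) := by
          simp only [mul_sub, Finset.sum_sub_distrib]
          ring
        have h3 : |max (δ * ∑ j, Real.cos (θ i - θ j) * r j t + V i) 0 - rb i|
            ≤ |δ * ∑ j, Real.cos (θ i - θ j) * (r j t - rb j)| := by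
          conv_lhs => rw [← hfix i]
          rw [← hAB]
          exact abs_max_sub_max_le_abs _ _ 0
        have h4 : (max (δ * ∑ j, Real.cos (θ i - θ j) * r j t + V i) 0 - rb i) ^ 2
            ≤ (δ * ∑ j, Real.cos (θ i - θ j) * (r j t - rb j)) ^ 2 := by
          rw [← sq_abs (max _ 0 - rb i), ← sq_abs (δ * _)]
          exact pow_le_pow_left₀ (abs_nonneg _) h3 2
        calc (u' t i) ^ 2
            = (Real.exp t) ^ 2 * (max (δ * ∑ j, Real.cos (θ i - θ j) * r j t + V i) 0 - rb i) ^ 2 := by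
              rw [hu'app]; ring
          _ ≤ (Real.exp t) ^ 2 * (δ * ∑ j, Real.cos (θ i - θ j) * (r j t - rb j)) ^ 2 := by
              apply mul_le_mul_of_nonneg_left h4 (by positivity)
          _ = (Real.exp t) ^ 2 * (δ ^ 2 * (∑ j, Real.cos (θ i - θ j) * (r j t - rb j)) ^ 2) := by
              ring
      have hbes : ∑ i, (∑ j, Real.cos (θ i - θ j) * (r j t - rb j)) ^ 2
          ≤ ((N : ℝ) / 2) ^ 2 * ∑ j, (r j t - rb j) ^ 2 := by
        have hrw : ∀ i : Fin N, (∑ j, Real.cos (θ i - θ j) * (r j t - rb j))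
            = ∑ j, (Real.cos (θ i) * Real.cos (θ j) + Real.sin (θ i) * Real.sin (θ j))
              * (r j t - rb j) :=
          fun i => Finset.sum_congr rfl fun j _ => by rw [Real.cos_sub]
        rw [Finset.sum_congr rfl fun i _ => by rw [hrw i]]
        exact ring_bessel (by omega) (fun i => Real.cos (θ i)) (fun i => Real.sin (θ i))
          (fun j => r j t - rb j) hcc hss2 hcs
      have hut : ∑ i, (u t i) ^ 2 = (Real.exp t) ^ 2 * ∑ j, (r j t - rb j) ^ 2 := by
        have hpt : ∀ i : Fin N, (u t i) ^ 2 = (Real.exp t) ^ 2 * (r i t - rb i) ^ 2 := by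
          intro i; rw [huapp]; ring
        rw [Finset.sum_congr rfl fun i _ => hpt i, ← Finset.mul_sum]
      calc ∑ i, (u' t i) ^ 2
          ≤ ∑ i, (Real.exp t) ^ 2 * (δ ^ 2 * (∑ j, Real.cos (θ i - θ j) * (r j t - rb j)) ^ 2) :=
            Finset.sum_le_sum fun i _ => hptwise i
        _ = (Real.exp t) ^ 2 * δ ^ 2
            * ∑ i, (∑ j, Real.cos (θ i - θ j) * (r j t - rb j)) ^ 2 := by
            rw [← Finset.mul_sum, ← Finset.mul_sum, ← mul_assoc]
        _ ≤ (Real.exp t) ^ 2 * δ ^ 2 * (((N : ℝ) / 2) ^ 2 * ∑ j, (r j t - rb j) ^ 2) :=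
            mul_le_mul_of_nonneg_left hbes (by positivity)
        _ = K ^ 2 * ((Real.exp t) ^ 2 * ∑ j, (r j t - rb j) ^ 2) := by
            rw [hKdef]; ring
        _ = K ^ 2 * ∑ i, (u t i) ^ 2 := by rw [hut]
    nlinarith [norm_nonneg (u' t), mul_nonneg hK0 (norm_nonneg (u t))]
  -- Gronwall
  have hgron : ∀ t ≥ (0 : ℝ), ‖u t‖ ≤ ‖u 0‖ * Real.exp (K * t) := by
    intro T hT
    have hco : ContinuousOn u (Set.Icc 0 T) := fun x hx =>
      ((hderiv x hx.1).continuousAt).continuousWithinAt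
    have happ := norm_le_gronwallBound_of_norm_deriv_right_le (f := u) (f' := u')
      (δ := ‖u 0‖) (K := K) (ε := 0) (a := 0) (b := T) hco
      (fun x hx => (hderiv x hx.1).hasDerivWithinAt) le_rfl
      (fun x hx => by rw [add_zero]; exact hbound x hx.1)
    have h5 := happ T (Set.mem_Icc.2 ⟨hT, le_rfl⟩)
    rwa [gronwallBound_ε0, sub_zero] at h5
  have hcoord : ∀ (x : EuclideanSpace ℝ (Fin N)) (i : Fin N), |x i| ≤ ‖x‖ := by
    intro x i
    rw [EuclideanSpace.norm_eq]
    calc |x i| = Real.sqrt (‖x i‖ ^ 2) := by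
          rw [Real.sqrt_sq (norm_nonneg _), Real.norm_eq_abs]
      _ ≤ Real.sqrt (∑ j, ‖x j‖ ^ 2) :=
          Real.sqrt_le_sqrt (Finset.single_le_sum (f := fun j => ‖x j‖ ^ 2) (fun j _ => sq_nonneg _) (Finset.mem_univ i))
  have hfinal : ∀ t ≥ (0 : ℝ), ∀ i : Fin N,
      |r i t - rb i| ≤ ‖u 0‖ * Real.exp ((K - 1) * t) := by
    intro t ht i
    have h6 : |r i t - rb i| = Real.exp (-t) * |u t i| := by
      rw [huapp, abs_mul, abs_of_pos (Real.exp_pos t), ← mul_assoc, ← Real.exp_add,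
        neg_add_cancel, Real.exp_zero, one_mul]
    rw [h6]
    calc Real.exp (-t) * |u t i| ≤ Real.exp (-t) * (‖u 0‖ * Real.exp (K * t)) := by
          apply mul_le_mul_of_nonneg_left _ (le_of_lt (Real.exp_pos _))
          exact le_trans (hcoord (u t) i) (hgron t ht)
      _ = ‖u 0‖ * Real.exp ((K - 1) * t) := by
          rw [← mul_assoc, mul_comm (Real.exp (-t)), mul_assoc, ← Real.exp_add]
          congr 2
          ring
  rw [tendsto_pi_nhds]
  intro i
  rw [tendsto_iff_dist_tendsto_zero]
  apply squeeze_zero' (g := fun t => ‖u 0‖ * Real.exp ((K - 1) * t)) (Eventually.of_forall fun t => dist_nonneg)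
  · exact (eventually_ge_atTop (0 : ℝ)).mono fun t ht => by
      rw [Real.dist_eq]; exact hfinal t ht i
  · have h5 : Tendsto (fun t : ℝ => (K - 1) * t) atTop atBot := by
      have h7 : Tendsto (fun t : ℝ => (1 - K) * t) atTop atTop :=
        Tendsto.const_mul_atTop (by linarith) tendsto_id
      have h8 := tendsto_neg_atTop_atBot.comp h7
      convert h8 using 1
      funext t
      simp [Function.comp]
      ring
    have h6 : Tendsto (fun t => Real.exp ((K - 1) * t)) atTop (nhds 0) :=
      Real.tendsto_exp_atBot.comp h5
    simpa using h6.const_mul ‖u 0‖
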